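/- arXiv:1206.1390 — 4 statements merged into one kernel-verified Lean document; each statement's English description precedes it below -/
import Mathlib

section
/- In Flexible GMRES, if the j-th subdiagonal entry H(j+1,j) = 0 and the leading j-by-j Hessenberg submatrix H(1:j,1:j) is nonsingular, then the approximate solution x_j = x_0 + Z_j y_j, with y_j solving H(1:j,1:j) y_j = beta e_1, is an exact solution of Ax = b. -/
open Matrix

noncomputable def vnorm {n : ℕ} (v : Fin n → ℝ) : ℝ := Real.sqrt (∑ i, (v i) ^ 2)

/-- In Flexible GMRES, if `H(j+1,j) = 0` and the leading `j × j` Hessenberg submatrix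
`H(1:j,1:j)` is nonsingular, then `x_j = x_0 + Z_j y_j`, with `y_j` solving
`H(1:j,1:j) y_j = β e_1`, is an exact solution of `A x = b`. -/
theorem fgmres_breakdown_exact_solution
    {n m : ℕ} (hm : 0 < m)
    (A : Matrix (Fin n) (Fin n) ℝ) (hA : A.det ≠ 0)
    (b x0 : Fin n → ℝ)
    (r0 : Fin n → ℝ) (hr0 : r0 = b - A.mulVec x0)
    (β : ℝ) (hβ : β = vnorm r0) (hβpos : 0 < β)
    (q : Fin (m + 1) → Fin n → ℝ)
    (hq0 : q 0 = β⁻¹ • r0)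
    (horth : ∀ i k : Fin (m + 1), (∑ t, q i t * q k t) = if i = k then 1 else 0)
    (z : Fin m → Fin n → ℝ)
    (H : Matrix (Fin (m + 1)) (Fin m) ℝ)
    (hHess : ∀ (i : Fin (m + 1)) (k : Fin m), (k : ℕ) + 1 < (i : ℕ) → H i k = 0)
    (hrel : ∀ k : Fin m, A.mulVec (z k) = ∑ i, H i k • q i)
    (hzero : H (Fin.last m) ⟨m - 1, by omega⟩ = 0)
    (Hsq : Matrix (Fin m) (Fin m) ℝ)
    (hHsq : Hsq = Matrix.of fun i k : Fin m => H (Fin.castSucc i) k)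
    (hHnonsing : Hsq.det ≠ 0)
    (y : Fin m → ℝ)
    (hy : Hsq.mulVec y = fun i => if i = (⟨0, hm⟩ : Fin m) then β else 0) :
    A.mulVec (x0 + ∑ k, y k • z k) = b := by
  have hlast : ∀ k : Fin m, H (Fin.last m) k = 0 := by
    intro k
    rcases lt_or_eq_of_le (Nat.lt_succ_iff.mp (Nat.succ_lt_succ k.isLt)) with h | h
    · exact hHess _ _ (by simp [Fin.last]; omega)
    · have : k = ⟨m - 1, by omega⟩ := by
        apply Fin.ext; simp; omega
      rw [this]; exact hzero
  have hAz : A.mulVec (∑ k, y k • z k) = ∑ k, y k • A.mulVec (z k) := by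
    simp only [← Matrix.mulVecLin_apply, map_sum, _root_.map_smul]
  have key : A.mulVec (∑ k, y k • z k) = β • q 0 := by
    rw [hAz]
    calc ∑ k, y k • A.mulVec (z k)
        = ∑ k, ∑ i, (H i k * y k) • q i := by
          simp [hrel, Finset.smul_sum, smul_smul, mul_comm]
      _ = ∑ i, ∑ k, (H i k * y k) • q i := Finset.sum_comm
      _ = (∑ i : Fin m, ∑ k, (H i.castSucc k * y k) • q i.castSucc)
            + ∑ k, (H (Fin.last m) k * y k) • q (Fin.last m) := by
          rw [Fin.sum_univ_castSucc]
      _ = ∑ i : Fin m, (Hsq.mulVec y i) • q i.castSucc := by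
          simp [hlast, hHsq, Matrix.mulVec, dotProduct, Finset.sum_smul]
      _ = β • q 0 := by
          rw [hy]
          rw [Finset.sum_eq_single (⟨0, hm⟩ : Fin m)]
          · norm_num
          · intro i _ hi; simp [hi]
          · simp
  have hq0' : β • q 0 = r0 := by
    rw [hq0, smul_smul, mul_inv_cancel₀ (ne_of_gt hβpos), one_smul]
  rw [Matrix.mulVec_add, key, hq0', hr0]
  abel
end

section
/- Any nonincreasing residual history is attainable by GMRES (Greenbaum–Pták–Strakoš, existence part for fully decreasing case): given any positive reals f_0 ≥ f_1 ≥ ... ≥ f_{n-1} > 0, there exist a nonsingular n-by-n matrix A and a vector b with ||b|| = f_0 such that the GMRES residual norms satisfy ||b - A x_j|| = f_j for j = 0, ..., n-1, where x_j minimizes the residual over K_j(A, b) (with x_0 = 0). -/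
open Matrix

def krylov {n : ℕ} (A : Matrix (Fin n) (Fin n) ℝ) (r : Fin n → ℝ) (j : ℕ) :
    Submodule ℝ (Fin n → ℝ) :=
  Submodule.span ℝ {v | ∃ i < j, v = (A ^ i).mulVec r}

section GPS

variable {n : ℕ}

/-- extension of `f` to `ℕ` by zero. -/
noncomputable def ggps (n : ℕ) (f : Fin n → ℝ) : ℕ → ℝ :=
  fun i => if h : i < n then f ⟨i, h⟩ else 0

/-- the GPS right-hand side vector. -/
noncomputable def bgps (n : ℕ) (f : Fin n → ℝ) : Fin n → ℝ :=
  fun i => Real.sqrt (ggps n f i ^ 2 - ggps n f (i + 1) ^ 2)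

/-- the GPS matrix. -/
noncomputable def Agps (n : ℕ) (hn : 0 < n) (f : Fin n → ℝ) : Matrix (Fin n) (Fin n) ℝ :=
  fun k i =>
    if (i : ℕ) + 1 < n then (if (k : ℕ) = (i : ℕ) + 1 then 1 else 0)
    else (if (k : ℕ) = 0 then 1 else
      - bgps n f ⟨(k : ℕ) - 1, Nat.lt_of_le_of_lt (Nat.sub_le _ _) k.isLt⟩)
      / bgps n f ⟨n - 1, Nat.sub_lt hn Nat.one_pos⟩

lemma ggps_nonneg (f : Fin n → ℝ) (hpos : ∀ j, 0 < f j) : ∀ i, 0 ≤ ggps n f i := by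
  intro i; unfold ggps; split
  · exact (hpos _).le
  · exact le_rfl

lemma ggps_anti (f : Fin n → ℝ) (hpos : ∀ j, 0 < f j) (hmono : Antitone f) :
    ∀ i, ggps n f (i + 1) ≤ ggps n f i := by
  intro i; unfold ggps
  by_cases h : i + 1 < n
  · rw [dif_pos h, dif_pos (by omega)]
    exact hmono (by simp [Fin.le_def])
  · rw [dif_neg h]; split
    · exact (hpos _).le
    · exact le_rfl

lemma bgps_sq (f : Fin n → ℝ) (hpos : ∀ j, 0 < f j) (hmono : Antitone f) (i : Fin n) :
    bgps n f i ^ 2 = ggps n f (i : ℕ) ^ 2 - ggps n f ((i : ℕ) + 1) ^ 2 := by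
  unfold bgps
  rw [Real.sq_sqrt (by
    have h1 := ggps_nonneg f hpos ((i : ℕ) + 1)
    have h2 := ggps_anti f hpos hmono (i : ℕ)
    have h3 := ggps_nonneg f hpos (i : ℕ)
    nlinarith)]

lemma bgps_last (hn : 0 < n) (f : Fin n → ℝ) (hpos : ∀ j, 0 < f j) :
    bgps n f ⟨n - 1, Nat.sub_lt hn Nat.one_pos⟩ = f ⟨n - 1, Nat.sub_lt hn Nat.one_pos⟩ := by
  have h1 : ggps n f (n - 1) = f ⟨n - 1, Nat.sub_lt hn Nat.one_pos⟩ :=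
    dif_pos (Nat.sub_lt hn Nat.one_pos)
  have h2 : ggps n f (n - 1 + 1) = 0 := by unfold ggps; rw [dif_neg (by omega)]
  show Real.sqrt (ggps n f (n - 1) ^ 2 - ggps n f (n - 1 + 1) ^ 2) = _
  rw [h1, h2]
  rw [show f ⟨n - 1, Nat.sub_lt hn Nat.one_pos⟩ ^ 2 - 0 ^ 2
    = f ⟨n - 1, Nat.sub_lt hn Nat.one_pos⟩ ^ 2 by ring]
  exact Real.sqrt_sq (hpos _).le

end GPS

/-- Greenbaum–Pták–Strakoš (existence part): given positive nonincreasing reals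
`f_0 ≥ f_1 ≥ … ≥ f_{n-1} > 0`, there exist a nonsingular `n × n` matrix `A` and a
vector `b` with `‖b‖ = f_0` such that the GMRES residual norms (with `x_0 = 0`)
satisfy `‖b - A x_j‖ = f_j` for `j = 0, …, n-1`. -/
theorem gmres_any_convergence_curve
    {n : ℕ} (hn : 0 < n) (f : Fin n → ℝ)
    (hpos : ∀ j, 0 < f j) (hmono : Antitone f) :
    ∃ (A : Matrix (Fin n) (Fin n) ℝ) (b : Fin n → ℝ),
      A.det ≠ 0 ∧ vnorm b = f ⟨0, hn⟩ ∧
      ∀ j : Fin n,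
        sInf ((fun x => vnorm (b - A.mulVec x)) ''
          ((krylov A b (j : ℕ) : Submodule ℝ (Fin n → ℝ)) : Set (Fin n → ℝ))) = f j := by
  classical
  set g : ℕ → ℝ := ggps n f with hgdef
  set b : Fin n → ℝ := bgps n f with hbdef
  set A : Matrix (Fin n) (Fin n) ℝ := Agps n hn f with hAdef
  set L : Fin n := ⟨n - 1, Nat.sub_lt hn Nat.one_pos⟩ with hLdef
  have hLval : (L : ℕ) = n - 1 := rfl
  have hbL : b L = f L := bgps_last hn f hpos
  have hbLpos : 0 < b L := by rw [hbL]; exact hpos L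
  have hbLne : b L ≠ 0 := hbLpos.ne'
  have hbnn : ∀ i, 0 ≤ b i := fun i => Real.sqrt_nonneg _
  -- the two kinds of columns of A
  have hAcol1 : ∀ (k i : Fin n), (i : ℕ) + 1 < n →
      A k i = if (k : ℕ) = (i : ℕ) + 1 then 1 else 0 := by
    intro k i hi
    show Agps n hn f k i = _
    unfold Agps
    rw [if_pos hi]
  have hAcolL : ∀ k : Fin n,
      A k L = (if (k : ℕ) = 0 then 1 else
        - b ⟨(k : ℕ) - 1, Nat.lt_of_le_of_lt (Nat.sub_le _ _) k.isLt⟩) / b L := by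
    intro k
    show Agps n hn f k L = _
    unfold Agps
    rw [if_neg (by omega)]
  have hne_last : ∀ i : Fin n, i ≠ L → (i : ℕ) + 1 < n := by
    intro i hiL
    rcases Nat.lt_or_ge ((i : ℕ) + 1) n with h | h
    · exact h
    · exact absurd (Fin.ext (by have := i.isLt; omega)) hiL
  -- matrix action on standard basis
  have hAe : ∀ (i : Fin n) (h : (i : ℕ) + 1 < n),
      A.mulVec (Pi.single i 1) = Pi.single (⟨(i : ℕ) + 1, h⟩ : Fin n) 1 := by
    intro i h
    rw [Matrix.mulVec_single_one]
    funext k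
    show A k i = _
    rw [hAcol1 k i h, Pi.single_apply]
    by_cases hk : (k : ℕ) = (i : ℕ) + 1
    · rw [if_pos hk, if_pos (Fin.ext hk)]
    · rw [if_neg hk, if_neg (fun hh => hk (by rw [hh]))]
  -- A b = e₀
  have hAb : A.mulVec b = Pi.single (⟨0, hn⟩ : Fin n) 1 := by
    funext k
    show ∑ i, A k i * b i = _
    by_cases hk : (k : ℕ) = 0
    · rw [Finset.sum_eq_single L]
      · rw [hAcolL k, if_pos hk, Pi.single_apply, if_pos (Fin.ext hk)]
        field_simp
      · intro i _ hiL
        rw [hAcol1 k i (hne_last i hiL), if_neg (by omega), zero_mul]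
      · intro h; exact absurd (Finset.mem_univ L) h
    · -- k ≥ 1
      have hk1 : 1 ≤ (k : ℕ) := Nat.one_le_iff_ne_zero.mpr hk
      have hkpred : (k : ℕ) - 1 < n := Nat.lt_of_le_of_lt (Nat.sub_le _ _) k.isLt
      set k' : Fin n := ⟨(k : ℕ) - 1, hkpred⟩ with hk'def
      have hk'val : (k' : ℕ) = (k : ℕ) - 1 := rfl
      have hk'1 : (k' : ℕ) + 1 < n := by have := k.isLt; omega
      have hk'L : k' ≠ L := by
        intro hh
        have : (k' : ℕ) = (L : ℕ) := by rw [hh]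
        have := k.isLt
        omega
      have hterm : ∀ i : Fin n, A k i * b i =
          (if i = k' then b k' else 0) + (if i = L then - b k' else 0) := by
        intro i
        by_cases hiL : i = L
        · subst hiL
          rw [hAcolL k, if_neg hk, if_neg (fun hh => hk'L hh.symm), if_pos rfl]
          have : (⟨(k : ℕ) - 1, Nat.lt_of_le_of_lt (Nat.sub_le _ _) k.isLt⟩ : Fin n) = k' := rfl
          rw [this]
          field_simp
          ring
        · rw [hAcol1 k i (hne_last i hiL), if_neg hiL, add_zero]
          by_cases hik : i = k'
          · rw [if_pos (by subst hik; omega), if_pos hik, one_mul, hik]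
          · rw [if_neg (fun hh => hik (Fin.ext (by omega))), if_neg hik, zero_mul]
      rw [Finset.sum_congr rfl (fun i _ => hterm i), Finset.sum_add_distrib,
        Finset.sum_ite_eq' Finset.univ k' (fun _ => b k'),
        Finset.sum_ite_eq' Finset.univ L (fun _ => - b k')]
      simp only [Finset.mem_univ, if_pos]
      rw [Pi.single_apply, if_neg (fun hh => hk (by rw [hh]))]
      ring
  -- powers
  have hpow : ∀ (i : ℕ) (h : i < n),
      (A ^ (i + 1)).mulVec b = Pi.single (⟨i, h⟩ : Fin n) 1 := by
    intro i
    induction i with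
    | zero => intro h; rw [pow_one]; exact hAb
    | succ m ih =>
      intro h
      rw [pow_succ', ← Matrix.mulVec_mulVec, ih (by omega), hAe ⟨m, by omega⟩ h]
  -- surjectivity and determinant
  have hsingle_mem : ∀ i : Fin n, Pi.single i 1 ∈ LinearMap.range (Matrix.mulVecLin A) := by
    intro i
    refine ⟨(A ^ (i : ℕ)).mulVec b, ?_⟩
    rw [Matrix.mulVecLin_apply, Matrix.mulVec_mulVec, ← pow_succ', hpow (i : ℕ) i.isLt, Fin.eta]
  have hsurj : Function.Surjective (Matrix.mulVecLin A) := by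
    rw [← LinearMap.range_eq_top, eq_top_iff]
    intro x _
    have hx : x = ∑ i, x i • (Pi.single i 1 : Fin n → ℝ) := by
      funext k
      rw [Finset.sum_apply]
      have hterm : ∀ i : Fin n, (x i • (Pi.single i 1 : Fin n → ℝ)) k
          = if k = i then x i else 0 := by
        intro i
        rw [Pi.smul_apply, Pi.single_apply, smul_eq_mul]
        split <;> simp
      rw [Finset.sum_congr rfl (fun i _ => hterm i), Finset.sum_ite_eq Finset.univ k x,
        if_pos (Finset.mem_univ k)]
    rw [hx]
    exact Submodule.sum_mem _ fun i _ => Submodule.smul_mem _ _ (hsingle_mem i)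
  have hinj : Function.Injective (Matrix.mulVecLin A) :=
    LinearMap.injective_iff_surjective.mpr hsurj
  have hdet : A.det ≠ 0 := by
    intro hdet0
    obtain ⟨v, hv, hAv⟩ := (Matrix.exists_mulVec_eq_zero_iff).mpr hdet0
    exact hv (hinj (by rw [Matrix.mulVecLin_apply, hAv, map_zero]))
  -- tail sums
  have key_sum : ∀ j : Fin n,
      (∑ k : Fin n, if (j : ℕ) ≤ (k : ℕ) then b k ^ 2 else 0) = f j ^ 2 := by
    intro j
    have h1 : (∑ k : Fin n, if (j : ℕ) ≤ (k : ℕ) then b k ^ 2 else 0)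
        = ∑ k ∈ Finset.range n, (if (j : ℕ) ≤ k then g k ^ 2 - g (k + 1) ^ 2 else 0) := by
      rw [← Fin.sum_univ_eq_sum_range
        (fun k => if (j : ℕ) ≤ k then g k ^ 2 - g (k + 1) ^ 2 else 0) n]
      refine Finset.sum_congr rfl fun k _ => ?_
      by_cases h : (j : ℕ) ≤ (k : ℕ)
      · rw [if_pos h, if_pos h, hbdef, bgps_sq f hpos hmono, hgdef]
      · rw [if_neg h, if_neg h]
    rw [h1, ← Finset.sum_filter]
    have h2 : Finset.filter (fun k => (j : ℕ) ≤ k) (Finset.range n) = Finset.Ico (j : ℕ) n := by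
      ext k; simp [Finset.mem_filter, Finset.mem_range, Finset.mem_Ico, and_comm]
    rw [h2, Finset.sum_Ico_eq_sub _ j.isLt.le, Finset.sum_range_sub' (fun k => g k ^ 2),
      Finset.sum_range_sub' (fun k => g k ^ 2)]
    have hgn : g n = 0 := by rw [hgdef]; unfold ggps; rw [dif_neg (lt_irrefl n)]
    have hgj : g (j : ℕ) = f j := by rw [hgdef]; unfold ggps; rw [dif_pos j.isLt]
    rw [hgn, hgj]; ring
  refine ⟨A, b, hdet, ?_, ?_⟩
  · -- vnorm b = f 0
    unfold vnorm
    have h0 : (∑ i : Fin n, b i ^ 2) = f ⟨0, hn⟩ ^ 2 := by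
      rw [← key_sum ⟨0, hn⟩]
      exact Finset.sum_congr rfl fun k _ => by rw [if_pos (Nat.zero_le _)]
    rw [h0, Real.sqrt_sq (hpos _).le]
  · intro j
    -- GMRES residual norms
    have hub : ∀ x ∈ krylov A b (j : ℕ), ∀ k : Fin n, (j : ℕ) ≤ (k : ℕ) →
        A.mulVec x k = 0 := by
      intro x hx
      refine Submodule.span_induction ?_ ?_ ?_ ?_ hx
      · rintro v ⟨i, hi, rfl⟩ k hk
        rw [Matrix.mulVec_mulVec, ← pow_succ', hpow i (lt_of_lt_of_le hi j.isLt.le),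
          Pi.single_apply, if_neg (by intro hh; rw [hh] at hk; simp at hk; omega)]
      · intro k _; rw [Matrix.mulVec_zero]; rfl
      · intro v w _ _ hv hw k hk
        rw [Matrix.mulVec_add]
        show A.mulVec v k + A.mulVec w k = 0
        rw [hv k hk, hw k hk, add_zero]
      · intro c v _ hv k hk
        rw [Matrix.mulVec_smul]
        show c * A.mulVec v k = 0
        rw [hv k hk, mul_zero]
    -- the minimizer
    set x0 : Fin n → ℝ :=
      ∑ i : Fin n, if (i : ℕ) < (j : ℕ) then b i • (A ^ (i : ℕ)).mulVec b else 0 with hx0def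
    have hx0mem : x0 ∈ krylov A b (j : ℕ) := by
      refine Submodule.sum_mem _ fun i _ => ?_
      split
      · exact Submodule.smul_mem _ _ (Submodule.subset_span ⟨(i : ℕ), ‹_›, rfl⟩)
      · exact Submodule.zero_mem _
    have hAx0 : A.mulVec x0 = fun k : Fin n => if (k : ℕ) < (j : ℕ) then b k else 0 := by
      have h1 : A.mulVec x0 = ∑ i : Fin n,
          if (i : ℕ) < (j : ℕ) then b i • (Pi.single i 1 : Fin n → ℝ) else 0 := by
        show Matrix.mulVecLin A x0 = _
        rw [hx0def, map_sum]
        refine Finset.sum_congr rfl fun i _ => ?_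
        split
        · rw [LinearMap.map_smul, Matrix.mulVecLin_apply, Matrix.mulVec_mulVec, ← pow_succ',
            hpow (i : ℕ) i.isLt, Fin.eta]
        · rw [map_zero]
      funext k
      rw [h1, Finset.sum_apply]
      have hterm : ∀ i : Fin n,
          (if (i : ℕ) < (j : ℕ) then b i • (Pi.single i 1 : Fin n → ℝ) else 0) k
          = if i = k then (if (k : ℕ) < (j : ℕ) then b k else 0) else 0 := by
        intro i
        by_cases hik : i = k
        · subst hik; rw [if_pos rfl]
          split
          · rw [Pi.smul_apply, Pi.single_apply, if_pos rfl, smul_eq_mul, mul_one]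
          · rfl
        · rw [if_neg hik]
          split
          · rw [Pi.smul_apply, Pi.single_apply, if_neg (fun hh => hik hh.symm), smul_eq_mul,
              mul_zero]
          · rfl
      rw [Finset.sum_congr rfl (fun i _ => hterm i),
        Finset.sum_ite_eq' Finset.univ k (fun _ => if (k : ℕ) < (j : ℕ) then b k else 0),
        if_pos (Finset.mem_univ k)]
    have hres0 : vnorm (b - A.mulVec x0) = f j := by
      unfold vnorm
      have h1 : (∑ k : Fin n, (b - A.mulVec x0) k ^ 2)
          = ∑ k : Fin n, if (j : ℕ) ≤ (k : ℕ) then b k ^ 2 else 0 := by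
        refine Finset.sum_congr rfl fun k _ => ?_
        simp only [Pi.sub_apply, hAx0]
        by_cases h : (k : ℕ) < (j : ℕ)
        · rw [if_pos h, if_neg (by omega)]; ring
        · rw [if_neg h, if_pos (by omega)]; ring
      rw [h1, key_sum j, Real.sqrt_sq (hpos _).le]
    have hlb : ∀ y ∈ ((fun x => vnorm (b - A.mulVec x)) ''
        ((krylov A b (j : ℕ) : Submodule ℝ (Fin n → ℝ)) : Set (Fin n → ℝ))), f j ≤ y := by
      rintro y ⟨x, hx, rfl⟩
      unfold vnorm
      have h1 : (∑ k : Fin n, if (j : ℕ) ≤ (k : ℕ) then b k ^ 2 else 0)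
          ≤ ∑ k : Fin n, (b - A.mulVec x) k ^ 2 := by
        refine Finset.sum_le_sum fun k _ => ?_
        by_cases h : (j : ℕ) ≤ (k : ℕ)
        · rw [if_pos h, Pi.sub_apply, hub x hx k h, sub_zero]
        · rw [if_neg h]; positivity
      calc f j = Real.sqrt (f j ^ 2) := (Real.sqrt_sq (hpos _).le).symm
        _ ≤ _ := by
            apply Real.sqrt_le_sqrt
            rw [← key_sum j]
            exact h1
    refine IsLeast.csInf_eq ⟨⟨x0, hx0mem, hres0⟩, hlb⟩
end

section
/- Complete stagnation of GMRES is possible: for every n ≥ 2 there exists a nonsingular n-by-n real matrix A and a nonzero vector b such that the GMRES residuals satisfy ||b - A x_j|| = ||b|| for all j = 0, 1, ..., n-1; for instance the cyclic shift matrix A with A e_i = e_{i+1 mod n} and b = e_1 has this property. -/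
open Matrix

/-- Complete stagnation of GMRES is possible: for every `n ≥ 2` there exist a
nonsingular `n × n` matrix `A` (for instance the cyclic shift `A e_i = e_{i+1 mod n}`)
and a nonzero vector `b` such that the GMRES residuals (with `x_0 = 0`) satisfy
`‖b - A x_j‖ = ‖b‖` for `j = 0, 1, …, n-1`. -/
theorem gmres_complete_stagnation
    (n : ℕ) (hn : 2 ≤ n) :
    ∃ (A : Matrix (Fin n) (Fin n) ℝ) (b : Fin n → ℝ),
      A.det ≠ 0 ∧ b ≠ 0 ∧
      (∀ i : Fin n,
        A.mulVec (fun t => if t = i then 1 else 0) =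
          fun t => if t = (⟨((i : ℕ) + 1) % n, Nat.mod_lt _ (by omega)⟩ : Fin n) then 1 else 0) ∧
      ∀ j < n,
        sInf ((fun x => vnorm (b - A.mulVec x)) ''
          ((krylov A b j : Submodule ℝ (Fin n → ℝ)) : Set (Fin n → ℝ))) = vnorm b := by
  haveI : NeZero n := ⟨by omega⟩
  set A : Matrix (Fin n) (Fin n) ℝ := fun t s => if t = s + 1 then 1 else 0 with hAdef
  set b : Fin n → ℝ := fun t => if t = 0 then 1 else 0 with hbdef
  -- the mod-n successor equals Fin addition of 1
  have hmod : ∀ i : Fin n,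
      (⟨((i : ℕ) + 1) % n, Nat.mod_lt _ (by omega)⟩ : Fin n) = i + 1 := by
    intro i
    apply Fin.ext
    simp [Fin.val_add, Nat.mod_eq_of_lt (show 1 < n by omega)]
  -- action on basis vectors
  have hA : ∀ i : Fin n, A.mulVec (fun t => if t = i then 1 else 0) =
      fun t => if t = i + 1 then 1 else 0 := by
    intro i
    funext t
    simp only [Matrix.mulVec, dotProduct, hAdef]
    rw [Finset.sum_eq_single i]
    · simp
    · intro s _ hs; simp [hs]
    · simp
  -- nonsingularity via orthogonality
  have horth : A * Aᵀ = 1 := by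
    ext t u
    rw [Matrix.mul_apply]; simp only [Matrix.transpose_apply]
    simp only [Matrix.mul_apply, Matrix.transpose_apply, hAdef, Matrix.one_apply]
    rw [Finset.sum_eq_single (t - 1)]
    · simp [sub_add_cancel, eq_comm]
    · intro s _ hs
      have : t ≠ s + 1 := by
        intro h; apply hs; rw [h]; exact (add_sub_cancel_right s 1).symm
      simp [this]
    · simp
  have hdet : A.det ≠ 0 := by
    have h1 : A.det * A.det = 1 := by
      have := congrArg Matrix.det horth
      rwa [Matrix.det_mul, Matrix.det_transpose, Matrix.det_one] at this
    intro h
    rw [h, mul_zero] at h1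
    exact zero_ne_one h1
  -- b ≠ 0
  have hb : b ≠ 0 := by
    intro h
    have := congrFun h 0
    simp [hbdef] at this
  -- powers applied to b
  have hpow : ∀ (i : ℕ) (hi : i < n),
      (A ^ i).mulVec b = fun t => if t = (⟨i, hi⟩ : Fin n) then 1 else 0 := by
    intro i
    induction i with
    | zero =>
      intro _
      simp only [pow_zero, Matrix.one_mulVec, hbdef]
      funext t
      congr 1
    | succ i ih =>
      intro hi
      have hi' : i < n := by omega
      rw [pow_succ', ← Matrix.mulVec_mulVec, ih hi', hA]
      funext t
      have : (⟨i, by omega⟩ : Fin n) + 1 = (⟨i + 1, by omega⟩ : Fin n) := by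
        apply Fin.ext
        simp [Fin.val_add, Nat.mod_eq_of_lt (show 1 < n by omega),
          Nat.mod_eq_of_lt hi]
      rw [this]
  -- key: for x in the Krylov space, (A.mulVec x) 0 = 0
  have hkey : ∀ j : ℕ, j < n → ∀ x ∈ krylov A b j, (A.mulVec x) 0 = 0 := by
    intro j hj x hx
    induction hx using Submodule.span_induction with
    | mem v hv =>
      obtain ⟨i, hij, rfl⟩ := hv
      have hi : i < n := by omega
      rw [hpow i hi, hA]
      have h1 : ((⟨i, by omega⟩ : Fin n) + 1 : Fin n) ≠ 0 := by
        intro h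
        have := congrArg Fin.val h
        simp [Fin.val_add, Nat.mod_eq_of_lt (show 1 < n by omega),
          Nat.mod_eq_of_lt (show i + 1 < n by omega)] at this
      simp [Ne.symm h1]
    | zero => simp
    | add y z _ _ hy hz => rw [Matrix.mulVec_add]; simp [hy, hz]
    | smul c y _ hy => rw [Matrix.mulVec_smul]; simp [hy]
  -- vnorm b = 1
  have hvb : vnorm b = 1 := by
    unfold vnorm
    rw [show ∑ i, (b i) ^ 2 = 1 by
      simp only [hbdef]
      rw [Finset.sum_eq_single 0]
      · simp
      · intro s _ hs; simp [hs]
      · simp]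
    exact Real.sqrt_one
  refine ⟨A, b, hdet, hb, fun i => by rw [hA i, hmod i], ?_⟩
  intro j hj
  set S := (fun x => vnorm (b - A.mulVec x)) ''
      ((krylov A b j : Submodule ℝ (Fin n → ℝ)) : Set (Fin n → ℝ)) with hS
  have hmem : vnorm b ∈ S := by
    refine ⟨0, Submodule.zero_mem _, ?_⟩
    simp
  have hlb : ∀ y ∈ S, vnorm b ≤ y := by
    rintro y ⟨x, hx, rfl⟩
    rw [hvb]
    have h0 : (b - A.mulVec x) 0 = 1 := by
      simp [hkey j hj x hx, hbdef]
    unfold vnorm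
    have h1 : (1 : ℝ) ≤ ∑ i, ((b - A.mulVec x) i) ^ 2 := by
      calc (1 : ℝ) = ((b - A.mulVec x) 0) ^ 2 := by rw [h0]; norm_num
        _ ≤ ∑ i, ((b - A.mulVec x) i) ^ 2 :=
          Finset.single_le_sum (f := fun i => ((b - A.mulVec x) i) ^ 2)
            (fun i _ => sq_nonneg _) (Finset.mem_univ (0 : Fin n))
    calc (1 : ℝ) = Real.sqrt 1 := Real.sqrt_one.symm
      _ ≤ _ := Real.sqrt_le_sqrt h1
  exact le_antisymm (csInf_le ⟨vnorm b, hlb⟩ hmem) (le_csInf ⟨_, hmem⟩ hlb)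
end

section
/- Inexact matrix-vector products model as flexible preconditioning: if at step j the computed product is (A + E_j) z_j for some error matrix E_j with A + E_j possibly differing arbitrarily across j, then the computed quantities coincide exactly with those of FGMRES applied with 'preconditioner applications' z_j' := z_j + A^{-1} E_j z_j; in particular, the projected least-squares relation ||b - A(x_0 + Z_j' y)||_2 = ||beta e_1 - H̄_j y||_2 holds with Z_j' = [z_1', ..., z_j']. -/
open Matrix

lemma vnorm_orthonormal_comb {n m : ℕ} (q : Fin m → Fin n → ℝ)
    (horth : ∀ i k : Fin m, (∑ t, q i t * q k t) = if i = k then 1 else 0)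
    (c : Fin m → ℝ) :
    vnorm (∑ i, c i • q i) = vnorm c := by
  unfold vnorm
  congr 1
  have : (∑ t, ((∑ i, c i • q i) t) ^ 2)
      = ∑ t, ∑ i, ∑ j, (c i * c j) * (q i t * q j t) := by
    apply Finset.sum_congr rfl
    intro t _
    simp only [Finset.sum_apply, Pi.smul_apply, smul_eq_mul, sq,
      Finset.sum_mul_sum]
    apply Finset.sum_congr rfl; intro i _
    apply Finset.sum_congr rfl; intro j _
    ring
  rw [this]
  rw [Finset.sum_comm]
  have : ∀ i : Fin m, (∑ t, ∑ j, (c i * c j) * (q i t * q j t)) = c i ^ 2 := by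
    intro i
    rw [Finset.sum_comm]
    have : ∀ j : Fin m, (∑ t, (c i * c j) * (q i t * q j t))
        = (c i * c j) * (if i = j then 1 else 0) := by
      intro j
      rw [← Finset.mul_sum, horth i j]
    simp only [this]
    simp [sq]
  simp only [this]

/-- Inexact matrix-vector products model as flexible preconditioning: if the computed
product at step `j` is `(A + E_j) z_j`, the computed quantities coincide exactly with
those of FGMRES applied with preconditioner applications `z_j' = z_j + A⁻¹ E_j z_j`;
in particular `A z_j' = (A + E_j) z_j` and the projected least-squares relation
`‖b - A(x_0 + Z' y)‖₂ = ‖β e_1 - H̄ y‖₂` holds. -/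
theorem inexact_products_as_flexible_preconditioning
    {n m : ℕ}
    (A : Matrix (Fin n) (Fin n) ℝ) (hA : A.det ≠ 0)
    (E : Fin m → Matrix (Fin n) (Fin n) ℝ)
    (b x0 : Fin n → ℝ)
    (r0 : Fin n → ℝ) (hr0 : r0 = b - A.mulVec x0)
    (β : ℝ) (hβ : β = vnorm r0) (hβpos : 0 < β)
    (q : Fin (m + 1) → Fin n → ℝ)
    (hq0 : q 0 = β⁻¹ • r0)
    (horth : ∀ i k : Fin (m + 1), (∑ t, q i t * q k t) = if i = k then 1 else 0)
    (z : Fin m → Fin n → ℝ)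
    (H : Matrix (Fin (m + 1)) (Fin m) ℝ)
    (hrel : ∀ k : Fin m, (A + E k).mulVec (z k) = ∑ i, H i k • q i)
    (z' : Fin m → Fin n → ℝ)
    (hz' : ∀ k, z' k = z k + A⁻¹.mulVec ((E k).mulVec (z k))) :
    (∀ k : Fin m, A.mulVec (z' k) = (A + E k).mulVec (z k)) ∧
    ∀ y : Fin m → ℝ,
      vnorm (b - A.mulVec (x0 + ∑ k, y k • z' k)) =
        vnorm ((fun i => if i = (0 : Fin (m + 1)) then β else 0) - H.mulVec y) := by
  have hAinv : IsUnit A := (Matrix.isUnit_iff_isUnit_det A).2 (isUnit_iff_ne_zero.2 hA)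
  have hAz' : ∀ k : Fin m, A.mulVec (z' k) = (A + E k).mulVec (z k) := by
    intro k
    rw [hz' k]
    rw [Matrix.mulVec_add, Matrix.mulVec_mulVec, Matrix.mul_nonsing_inv A (isUnit_iff_ne_zero.2 hA),
      Matrix.one_mulVec, Matrix.add_mulVec]
  refine ⟨hAz', ?_⟩
  intro y
  have hr0q : r0 = β • q 0 := by
    rw [hq0, smul_smul, mul_inv_cancel₀ (ne_of_gt hβpos), one_smul]
  have hresid : b - A.mulVec (x0 + ∑ k, y k • z' k)
      = ∑ i, ((if i = (0 : Fin (m + 1)) then β else 0) - H.mulVec y i) • q i := by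
    rw [Matrix.mulVec_add]
    have hsum : A.mulVec (∑ k, y k • z' k) = ∑ k, y k • (A + E k).mulVec (z k) := by
      have h1 : A.mulVec (∑ k, y k • z' k) = A.mulVecLin (∑ k, y k • z' k) := rfl
      rw [h1, map_sum]
      refine Finset.sum_congr rfl fun k _ => ?_
      rw [_root_.map_smul, Matrix.mulVecLin_apply, hAz' k]
    rw [hsum]
    have : ∑ k, y k • (A + E k).mulVec (z k)
        = ∑ i, (H.mulVec y i) • q i := by
      simp only [hrel, Finset.smul_sum]
      rw [Finset.sum_comm]
      refine Finset.sum_congr rfl fun i _ => ?_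
      rw [Matrix.mulVec, dotProduct, Finset.sum_smul]
      refine Finset.sum_congr rfl fun k _ => ?_
      rw [smul_smul, mul_comm]
    rw [this]
    have hb : b - (A.mulVec x0 + ∑ i, (H.mulVec y i) • q i)
        = β • q 0 - ∑ i, (H.mulVec y i) • q i := by
      rw [← hr0q]
      rw [hr0]
      abel
    rw [hb]
    have : (β • q 0 : Fin n → ℝ)
        = ∑ i, (if i = (0 : Fin (m + 1)) then β else 0) • q i := by
      rw [Finset.sum_eq_single (0 : Fin (m + 1))]
      · simp
      · intro i _ hi; simp [hi]
      · simp
    rw [this, ← Finset.sum_sub_distrib]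
    refine Finset.sum_congr rfl fun i _ => ?_
    rw [sub_smul]
  rw [hresid]
  exact vnorm_orthonormal_comb q horth _
end
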